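/- Suppose |R| ≥ K. Then a feasible matrix P̂ = [p̂_{k,i}] is a global minimizer of F over the set of feasible matrices if and only if: (i) for every i ∈ R and every k, p̂_{k,i} = [Σ_{l=1}^K (d_{k,i}²/d_{l,i}²)^{1/(m-1)}]^{-1}; and (ii) for every i ∉ R, p̂_{k,i} = 0 for every k with d_{k,i} > 0 (and consequently the unit total mass Σ_k p̂_{k,i} = 1 is distributed arbitrarily among the indices k with d_{k,i} = 0). -/

import Mathlib

open Finset

private lemma tangent_lt {m : ℝ} (hm : 1 < m) {c x : ℝ} (hc : 0 < c) (hx : 0 ≤ x)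
    (hne : x ≠ c) :
    c ^ m + m * c ^ (m - 1) * (x - c) < x ^ m := by
  have hs : -1 ≤ x / c - 1 := by
    have : 0 ≤ x / c := div_nonneg hx hc.le
    linarith
  have hs' : x / c - 1 ≠ 0 := by
    intro h
    exact hne ((div_eq_one_iff_eq hc.ne').mp (sub_eq_zero.mp h))
  have hb := one_add_mul_self_lt_rpow_one_add hs hs' hm
  have h1 : 1 + (x / c - 1) = x / c := by ring
  rw [h1] at hb
  have hcm : (0:ℝ) < c ^ m := Real.rpow_pos_of_pos hc m
  have h2 : (x / c) ^ m = x ^ m / c ^ m := Real.div_rpow hx hc.le m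
  have h4 := mul_lt_mul_of_pos_left hb hcm
  rw [h2] at h4
  have h3 : c ^ (m - 1) = c ^ m / c := by
    rw [Real.rpow_sub hc, Real.rpow_one]
  calc c ^ m + m * c ^ (m - 1) * (x - c)
      = c ^ m * (1 + m * (x / c - 1)) := by rw [h3]; field_simp
    _ < c ^ m * (x ^ m / c ^ m) := h4
    _ = x ^ m := by field_simp

private lemma tangent_le {m : ℝ} (hm : 1 < m) {c x : ℝ} (hc : 0 < c) (hx : 0 ≤ x) :
    c ^ m + m * c ^ (m - 1) * (x - c) ≤ x ^ m := by
  rcases eq_or_ne x c with rfl | hne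
  · simp
  · exact (tangent_lt hm hc hx hne).le

/-- The optimal membership vector for a column with positive weights. -/
private noncomputable def cOf {K : ℕ} (m : ℝ) (w : Fin K → ℝ) (k : Fin K) : ℝ :=
  (∑ l, (w k / w l) ^ ((1 : ℝ) / (m - 1)))⁻¹

private lemma col_main {K : ℕ} (hK : 1 ≤ K) {m : ℝ} (hm : 1 < m) {w : Fin K → ℝ}
    (hw : ∀ k, 0 < w k) :
    (∀ k, 0 < cOf m w k) ∧ (∑ k, cOf m w k = 1) ∧
    (∀ p : Fin K → ℝ, (∀ k, 0 ≤ p k) → ∑ k, p k = 1 →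
      (∑ k, cOf m w k ^ m * w k ≤ ∑ k, p k ^ m * w k ∧
       (∑ k, p k ^ m * w k = ∑ k, cOf m w k ^ m * w k → ∀ k, p k = cOf m w k))) := by
  have hm1 : (0:ℝ) < m - 1 := by linarith
  have hne : Nonempty (Fin K) := ⟨⟨0, hK⟩⟩
  set t : ℝ := 1 / (m - 1) with ht
  set S : ℝ := ∑ l, (w l ^ t)⁻¹ with hS
  have hSpos : 0 < S :=
    Finset.sum_pos (fun l _ => inv_pos.mpr (Real.rpow_pos_of_pos (hw l) t)) univ_nonempty
  have hsum : ∀ k, ∑ l, (w k / w l) ^ t = w k ^ t * S := by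
    intro k
    rw [hS, Finset.mul_sum]
    refine Finset.sum_congr rfl fun l _ => ?_
    rw [Real.div_rpow (hw k).le (hw l).le, div_eq_mul_inv]
  have hceq : ∀ k, cOf m w k = (w k ^ t)⁻¹ * S⁻¹ := by
    intro k
    rw [cOf, ← ht, hsum k, mul_inv]
  have hcpos : ∀ k, 0 < cOf m w k := by
    intro k
    rw [hceq k]
    have := Real.rpow_pos_of_pos (hw k) t
    positivity
  have hcsum : ∑ k, cOf m w k = 1 := by
    have : ∑ k, cOf m w k = (∑ k, (w k ^ t)⁻¹) * S⁻¹ := by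
      rw [Finset.sum_mul]
      exact Finset.sum_congr rfl fun k _ => hceq k
    rw [this, ← hS, mul_inv_cancel₀ hSpos.ne']
  have hlam : ∀ k, cOf m w k ^ (m - 1) * w k = (S ^ (m - 1))⁻¹ := by
    intro k
    have hwt : (0:ℝ) < w k ^ t := Real.rpow_pos_of_pos (hw k) t
    have e1 : ((w k ^ t * S)⁻¹) ^ (m - 1) = ((w k ^ t * S) ^ (m - 1))⁻¹ :=
      Real.inv_rpow (by positivity) _
    have e2 : (w k ^ t * S) ^ (m - 1) = (w k ^ t) ^ (m - 1) * S ^ (m - 1) :=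
      Real.mul_rpow hwt.le hSpos.le
    have e3 : (w k ^ t) ^ (m - 1) = w k := by
      rw [← Real.rpow_mul (hw k).le, ht, one_div, inv_mul_cancel₀ hm1.ne', Real.rpow_one]
    rw [hceq k, ← mul_inv, e1, e2, e3, mul_inv]
    rw [mul_right_comm, inv_mul_cancel₀ (hw k).ne', one_mul]
  refine ⟨hcpos, hcsum, fun p hp0 hp1 => ?_⟩
  set c : Fin K → ℝ := cOf m w with hc
  set g : Fin K → ℝ := fun k =>
    (p k ^ m - c k ^ m - m * c k ^ (m - 1) * (p k - c k)) * w k with hg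
  have hg0 : ∀ k, 0 ≤ g k := by
    intro k
    have := tangent_le hm (hcpos k) (hp0 k)
    have h' : 0 ≤ p k ^ m - c k ^ m - m * c k ^ (m - 1) * (p k - c k) := by linarith
    exact mul_nonneg h' (hw k).le
  have hconst : ∑ k, c k ^ (m - 1) * w k * (p k - c k) = 0 := by
    have h0 : ∀ k ∈ univ, c k ^ (m - 1) * w k * (p k - c k)
        = (S ^ (m - 1))⁻¹ * (p k - c k) := fun k _ => by rw [hlam k]
    rw [Finset.sum_congr rfl h0, ← Finset.mul_sum, Finset.sum_sub_distrib, hp1, hcsum,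
      sub_self, mul_zero]
  have hsum_eq : ∑ k, g k = ∑ k, p k ^ m * w k - ∑ k, c k ^ m * w k := by
    have expand : ∀ k ∈ univ, g k
        = p k ^ m * w k - c k ^ m * w k - m * (c k ^ (m - 1) * w k * (p k - c k)) :=
      fun k _ => by simp only [hg]; ring
    rw [Finset.sum_congr rfl expand, Finset.sum_sub_distrib, Finset.sum_sub_distrib,
      ← Finset.mul_sum, hconst, mul_zero, sub_zero]
  constructor
  · have h0 : 0 ≤ ∑ k, g k := Finset.sum_nonneg fun k _ => hg0 k
    linarith [hsum_eq]
  · intro heq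
    have hz : ∑ k, g k = 0 := by rw [hsum_eq, heq, sub_self]
    have hall := (Finset.sum_eq_zero_iff_of_nonneg (fun k _ => hg0 k)).mp hz
    intro k
    by_contra hnk
    have hlt := tangent_lt hm (hcpos k) (hp0 k) hnk
    have hgk : 0 < g k := by
      apply mul_pos _ (hw k)
      linarith
    have := hall k (mem_univ k)
    linarith

/-- With `|R| ≥ K` (where `R = {i : d_{k,i} > 0 ∀k}`), a feasible membership
matrix `P̂` globally minimizes `F(P) = Σ_i Σ_k p_{k,i}^m d_{k,i}²` over feasible matrices
iff (i) for `i ∈ R` it is given by the explicit formula, and (ii) for `i ∉ R` it vanishes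
on every `k` with `d_{k,i} > 0`. -/
theorem feasible_isMinOn_iff
    (K N : ℕ) (hK : 1 ≤ K) (hN : 1 ≤ N) (m : ℝ) (hm : 1 < m)
    (d : Fin K → Fin N → ℝ) (hd : ∀ k i, 0 ≤ d k i)
    (hR : K ≤ (Finset.univ.filter fun i : Fin N => ∀ k, 0 < d k i).card)
    (Phat : Fin K → Fin N → ℝ)
    (hfeas : (∀ k i, Phat k i ∈ Set.Icc (0 : ℝ) 1) ∧ (∀ i, ∑ k, Phat k i = 1) ∧
      (∀ k, 0 < ∑ i, Phat k i)) :
    ((∀ P : Fin K → Fin N → ℝ,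
        ((∀ k i, P k i ∈ Set.Icc (0 : ℝ) 1) ∧ (∀ i, ∑ k, P k i = 1) ∧
          (∀ k, 0 < ∑ i, P k i)) →
        ∑ i, ∑ k, Phat k i ^ m * d k i ^ 2 ≤ ∑ i, ∑ k, P k i ^ m * d k i ^ 2) ↔
      ((∀ i, (∀ k, 0 < d k i) → ∀ k,
          Phat k i = (∑ l, ((d k i ^ 2) / (d l i ^ 2)) ^ ((1 : ℝ) / (m - 1)))⁻¹) ∧
        (∀ i, ¬ (∀ k, 0 < d k i) → ∀ k, 0 < d k i → Phat k i = 0))) := by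
  classical
  obtain ⟨hbox, hcolsum, hrow⟩ := hfeas
  have hm0 : m ≠ 0 := by intro h; rw [h] at hm; linarith
  have hwpos : ∀ i : Fin N, (∀ k, 0 < d k i) → ∀ k, 0 < d k i ^ 2 := by
    intro i h k
    have := h k
    positivity
  have hcm : ∀ (i : Fin N), (∀ k, 0 < d k i) →
      (∀ k, 0 < cOf m (fun l => d l i ^ 2) k) ∧
      (∑ k, cOf m (fun l => d l i ^ 2) k = 1) ∧
      (∀ p : Fin K → ℝ, (∀ k, 0 ≤ p k) → ∑ k, p k = 1 →
        (∑ k, cOf m (fun l => d l i ^ 2) k ^ m * d k i ^ 2 ≤ ∑ k, p k ^ m * d k i ^ 2 ∧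
         (∑ k, p k ^ m * d k i ^ 2 = ∑ k, cOf m (fun l => d l i ^ 2) k ^ m * d k i ^ 2 →
          ∀ k, p k = cOf m (fun l => d l i ^ 2) k))) :=
    fun i h => col_main hK hm (hwpos i h)
  have hz : ∀ i : Fin N, ¬(∀ k, 0 < d k i) → ∃ k, d k i = 0 := by
    intro i h
    push_neg at h
    obtain ⟨k, hk⟩ := h
    exact ⟨k, le_antisymm hk (hd k i)⟩
  set Q : Fin K → Fin N → ℝ := fun k i =>
    if h : ∀ l, 0 < d l i then cOf m (fun l => d l i ^ 2) k
    else if k = (hz i h).choose then 1 else 0 with hQdef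
  have hQbox : ∀ k i, Q k i ∈ Set.Icc (0:ℝ) 1 := by
    intro k i
    simp only [hQdef]
    split_ifs with h hk
    · obtain ⟨hcp, hcs, _⟩ := hcm i h
      refine ⟨(hcp k).le, ?_⟩
      calc cOf m (fun l => d l i ^ 2) k ≤ ∑ l, cOf m (fun l' => d l' i ^ 2) l :=
            Finset.single_le_sum (fun l _ => (hcp l).le) (mem_univ k)
        _ = 1 := hcs
    · exact ⟨zero_le_one, le_rfl⟩
    · exact ⟨le_rfl, zero_le_one⟩
  have hQcol : ∀ i, ∑ k, Q k i = 1 := by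
    intro i
    by_cases h : ∀ l, 0 < d l i
    · simp only [hQdef, dif_pos h]
      exact (hcm i h).2.1
    · simp only [hQdef, dif_neg h]
      simp
  have hQzero : ∀ i : Fin N, ¬(∀ l, 0 < d l i) → ∑ k, Q k i ^ m * d k i ^ 2 = 0 := by
    intro i h
    apply Finset.sum_eq_zero
    intro k _
    simp only [hQdef, dif_neg h]
    by_cases hk : k = (hz i h).choose
    · rw [if_pos hk, hk, (hz i h).choose_spec]
      simp
    · rw [if_neg hk, Real.zero_rpow hm0, zero_mul]
  have hi0 : ∃ i0 : Fin N, ∀ k, 0 < d k i0 := by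
    have hcard : 0 < (univ.filter fun i : Fin N => ∀ k, 0 < d k i).card :=
      lt_of_lt_of_le hK hR
    obtain ⟨i0, hi0⟩ := Finset.card_pos.mp hcard
    exact ⟨i0, (Finset.mem_filter.mp hi0).2⟩
  obtain ⟨i0, hi0⟩ := hi0
  have hQrow : ∀ k, 0 < ∑ i, Q k i := by
    intro k
    have h1 : Q k i0 ≤ ∑ i, Q k i :=
      Finset.single_le_sum (fun i _ => (hQbox k i).1) (mem_univ i0)
    have h2 : 0 < Q k i0 := by
      simp only [hQdef, dif_pos hi0]
      exact (hcm i0 hi0).1 k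
    linarith
  have hlb : ∀ (P : Fin K → Fin N → ℝ), (∀ k i, P k i ∈ Set.Icc (0:ℝ) 1) →
      (∀ i, ∑ k, P k i = 1) →
      ∀ i, ∑ k, Q k i ^ m * d k i ^ 2 ≤ ∑ k, P k i ^ m * d k i ^ 2 := by
    intro P hPb hPc i
    by_cases h : ∀ l, 0 < d l i
    · have := ((hcm i h).2.2 (fun k => P k i) (fun k => (hPb k i).1) (hPc i)).1
      simpa only [hQdef, dif_pos h] using this
    · rw [hQzero i h]
      exact Finset.sum_nonneg fun k _ =>
        mul_nonneg (Real.rpow_nonneg (hPb k i).1 m) (sq_nonneg _)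
  constructor
  · intro hmin
    have hQle := hmin Q ⟨hQbox, hQcol, hQrow⟩
    have hub := hlb Phat hbox hcolsum
    have heqcol : ∀ i, ∑ k, Phat k i ^ m * d k i ^ 2 = ∑ k, Q k i ^ m * d k i ^ 2 := by
      intro i
      by_contra hne
      have hlt : ∑ k, Q k i ^ m * d k i ^ 2 < ∑ k, Phat k i ^ m * d k i ^ 2 :=
        lt_of_le_of_ne (hub i) (Ne.symm hne)
      have := Finset.sum_lt_sum (fun j (_ : j ∈ univ) => hub j) ⟨i, mem_univ i, hlt⟩
      linarith
    constructor
    · intro i h k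
      have heq := heqcol i
      simp only [hQdef, dif_pos h] at heq
      exact ((hcm i h).2.2 (fun l => Phat l i) (fun l => (hbox l i).1) (hcolsum i)).2 heq k
    · intro i h k hdk
      have heq := heqcol i
      rw [hQzero i h] at heq
      have hterm := (Finset.sum_eq_zero_iff_of_nonneg (fun l (_ : l ∈ univ) =>
        mul_nonneg (Real.rpow_nonneg (hbox l i).1 m) (sq_nonneg _))).mp heq k (mem_univ k)
      have hd2 : d k i ^ 2 ≠ 0 := by positivity
      have hpm : Phat k i ^ m = 0 := by
        rcases mul_eq_zero.mp hterm with h' | h'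
        · exact h'
        · exact absurd h' hd2
      exact (Real.rpow_eq_zero (hbox k i).1 hm0).mp hpm
  · rintro ⟨h1, h2⟩ P ⟨hPb, hPc, _⟩
    apply Finset.sum_le_sum
    intro i _
    by_cases h : ∀ l, 0 < d l i
    · have hle := ((hcm i h).2.2 (fun k => P k i) (fun k => (hPb k i).1) (hPc i)).1
      calc ∑ k, Phat k i ^ m * d k i ^ 2
          = ∑ k, cOf m (fun l => d l i ^ 2) k ^ m * d k i ^ 2 :=
            Finset.sum_congr rfl fun k _ => by rw [h1 i h k]; rfl
        _ ≤ ∑ k, P k i ^ m * d k i ^ 2 := hle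
    · have hzero : ∑ k, Phat k i ^ m * d k i ^ 2 = 0 := by
        apply Finset.sum_eq_zero
        intro k _
        by_cases hdk : 0 < d k i
        · rw [h2 i h k hdk, Real.zero_rpow hm0, zero_mul]
        · have hd0 : d k i = 0 := le_antisymm (not_lt.mp hdk) (hd k i)
          rw [hd0]
          ring
      rw [hzero]
      exact Finset.sum_nonneg fun k _ =>
        mul_nonneg (Real.rpow_nonneg (hPb k i).1 m) (sq_nonneg _)
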